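/- arXiv:2102.09848 — 2 statements merged into one kernel-verified Lean document; each statement's English description precedes it below -/
import Mathlib

section
/- Let P be a Z^n-invariant d-partition of Z^n. Then every block S of P is either d-sparse, or of the form S = v + L for some v in Z^n and some sublattice L of Z^n with {0} ⊊ L ⊊ Z^n. -/
open Set

variable {n : ℕ}

/-- The ztranslate `u + S` of a subset `S ⊆ ℤⁿ`. -/
def ztranslate (u : Fin n → ℤ) (S : Set (Fin n → ℤ)) : Set (Fin n → ℤ) :=
  (fun x => u + x) '' S

/-- A collection of subsets of `ℤⁿ` is `ℤⁿ`-invariant if it is preserved by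
all translations. -/
def ZInvariant (P : Set (Set (Fin n → ℤ))) : Prop :=
  ∀ u : Fin n → ℤ, ztranslate u '' P = P

/-- A subset `S ⊆ ℤⁿ` is `d`-sparse if `|S ∩ (u + S)| < d` for every nonzero
`u ∈ ℤⁿ`. -/
def ZSparse (d : ℕ) (S : Set (Fin n → ℤ)) : Prop :=
  ∀ u : Fin n → ℤ, u ≠ 0 → (S ∩ ztranslate u S).encard < d

/-- A `d`-partition of `ℤⁿ`: a collection of at least two subsets, each of
size at least `d`, such that every `d`-element subset of `ℤⁿ` is contained in
exactly one member of the collection. -/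
def IsDPartition (d : ℕ) (P : Set (Set (Fin n → ℤ))) : Prop :=
  2 ≤ P.encard ∧ (∀ S ∈ P, (d : ℕ∞) ≤ S.encard) ∧
    ∀ Y : Set (Fin n → ℤ), Y.encard = d → ∃! S, S ∈ P ∧ Y ⊆ S

lemma mem_ztranslate {u x : Fin n → ℤ} {S : Set (Fin n → ℤ)} :
    x ∈ ztranslate u S ↔ x - u ∈ S := by
  simp only [ztranslate, mem_image]
  constructor
  · rintro ⟨y, hy, rfl⟩; simpa using hy
  · intro h; exact ⟨x - u, h, by abel⟩

lemma ztranslate_zero {S : Set (Fin n → ℤ)} : ztranslate 0 S = S := by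
  ext x; simp [mem_ztranslate]

lemma ztranslate_add {u v : Fin n → ℤ} {S : Set (Fin n → ℤ)} :
    ztranslate (u + v) S = ztranslate u (ztranslate v S) := by
  ext x; simp [mem_ztranslate, sub_sub]


/-- Every block of a `ℤⁿ`-invariant `d`-partition of `ℤⁿ` is either `d`-sparse
or a ztranslate `v + L` of a sublattice `L` with `{0} ⊊ L ⊊ ℤⁿ`. -/
theorem block_sparse_or_affine_sublattice (d : ℕ) (P : Set (Set (Fin n → ℤ)))
    (hP : IsDPartition d P) (hinv : ZInvariant P) (S : Set (Fin n → ℤ))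
    (hS : S ∈ P) :
    ZSparse d S ∨ ∃ (v : Fin n → ℤ) (L : AddSubgroup (Fin n → ℤ)),
      L ≠ ⊥ ∧ L ≠ ⊤ ∧ S = ztranslate v (L : Set (Fin n → ℤ)) := by
  obtain ⟨hP2, hPd, hPu⟩ := hP
  -- d ≠ 0
  rcases Nat.eq_zero_or_pos d with hd0 | hd
  · exfalso
    obtain ⟨T, ⟨hT, -⟩, hTu⟩ := hPu ∅ (by simp [hd0])
    have hsub : P ⊆ {T} := fun U hU => hTu U ⟨hU, empty_subset _⟩
    have := hP2.trans ((encard_le_encard hsub).trans_eq (encard_singleton T))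
    norm_num at this
  by_cases hsp : ZSparse d S
  · exact Or.inl hsp
  right
  simp only [ZSparse, not_forall, not_lt] at hsp
  obtain ⟨u₀, hu₀, hcard⟩ := hsp
  have hmem : ∀ w, ztranslate w S ∈ P := fun w => by
    rw [← hinv w]; exact mem_image_of_mem _ hS
  have key : ∀ w, (d : ℕ∞) ≤ (S ∩ ztranslate w S).encard → ztranslate w S = S := by
    intro w hw
    obtain ⟨Y, hYsub, hYcard⟩ := Set.exists_subset_encard_eq hw
    obtain ⟨T, -, hTu⟩ := hPu Y hYcard
    exact (hTu _ ⟨hmem w, hYsub.trans inter_subset_right⟩).trans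
      (hTu S ⟨hS, hYsub.trans inter_subset_left⟩).symm
  have h0 : ztranslate u₀ S = S := key u₀ hcard
  set L : AddSubgroup (Fin n → ℤ) :=
    { carrier := {u | ztranslate u S = S}
      zero_mem' := ztranslate_zero
      add_mem' := by
        intro a b ha hb
        simp only [mem_setOf_eq] at *
        rw [ztranslate_add, hb, ha]
      neg_mem' := by
        intro a ha
        simp only [mem_setOf_eq] at *
        conv_lhs => rw [← ha, ← ztranslate_add, neg_add_cancel, ztranslate_zero] } with hL
  have hLmem : ∀ u, u ∈ L ↔ ztranslate u S = S := fun u => Iff.rfl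
  -- a point of S
  have hSne : S.Nonempty := by
    rw [← Set.encard_pos]
    calc (0 : ℕ∞) < d := by exact_mod_cast hd
    _ ≤ S.encard := hPd S hS
  obtain ⟨v, hv⟩ := hSne
  -- membership lemma: u ∈ L, x ∈ S → u + x ∈ S
  have hadd : ∀ u x, u ∈ L → x ∈ S → u + x ∈ S := by
    intro u x hu hx
    rw [← (hLmem u).mp hu]
    exact mem_ztranslate.mpr (by simpa using hx)
  -- S = v + L
  have hSeq : S = ztranslate v (L : Set (Fin n → ℤ)) := by
    ext w
    rw [mem_ztranslate]
    constructor
    · intro hw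
      -- show w - v ∈ L, i.e. ztranslate (w - v) S = S
      show ztranslate (w - v) S = S
      apply key
      have hrange : range (fun k : ℤ => w + k • u₀) ⊆ S ∩ ztranslate (w - v) S := by
        rintro x ⟨k, rfl⟩
        have hk : k • u₀ ∈ L := zsmul_mem ((hLmem u₀).mpr h0) k
        refine ⟨by simpa [add_comm] using hadd (k • u₀) w hk hw, mem_ztranslate.mpr ?_⟩
        have : w + k • u₀ - (w - v) = k • u₀ + v := by abel
        rw [this]
        exact hadd (k • u₀) v hk hv
      have hinj : Function.Injective (fun k : ℤ => w + k • u₀) := by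
        intro a b hab
        simp only [add_right_injective] at hab
        have hab' : a • u₀ = b • u₀ := by simpa using hab
        obtain ⟨i, hi⟩ := Function.ne_iff.mp hu₀
        have := congrFun hab' i
        simp only [Pi.smul_apply, smul_eq_mul, Pi.zero_apply] at this hi
        exact mul_right_cancel₀ hi this
      have hinf : (S ∩ ztranslate (w - v) S).Infinite :=
        ((infinite_range_of_injective hinj)).mono hrange
      rw [hinf.encard_eq]
      exact le_top
    · intro hw
      have := hadd (w - v) v hw hv
      simpa [sub_add_cancel] using this
  refine ⟨v, L, ?_, ?_, hSeq⟩
  · intro hbot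
    exact hu₀ (by simpa [hbot] using (hLmem u₀).mpr h0)
  · intro htop
    have hSuniv : S = univ := by
      rw [hSeq, htop]
      ext x; simp [mem_ztranslate]
    obtain ⟨T, hT, hTne⟩ := Set.exists_ne_of_one_lt_encard (lt_of_lt_of_le (by norm_num) hP2) S
    obtain ⟨Y, hYsub, hYcard⟩ := Set.exists_subset_encard_eq (hPd T hT)
    obtain ⟨U, -, hUu⟩ := hPu Y hYcard
    exact hTne ((hUu T ⟨hT, hYsub⟩).trans (hUu S ⟨hS, by rw [hSuniv]; exact subset_univ _⟩).symm)
end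

section
/- Suppose A is a collection of subsets of Z^n such that: Z^n is not in A; every A in A has |A| >= d; and whenever A_1, A_2 in A and u in Z^n satisfy |A_1 ∩ (u + A_2)| >= d, we have A_1 = u + A_2. Then the collection P consisting of all translates u + A (u in Z^n, A in A), together with all d-element subsets of Z^n not contained in any such translate, is a Z^n-invariant d-partition of Z^n. -/
open Set

variable {n : ℕ}

lemma zt_inj (u : Fin n → ℤ) : Function.Injective (fun x : Fin n → ℤ => u + x) :=
  fun a b h => by simpa using h

lemma zt_zero (S : Set (Fin n → ℤ)) : ztranslate 0 S = S := by simp [ztranslate]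

lemma zt_comp (u v : Fin n → ℤ) (S : Set (Fin n → ℤ)) :
    ztranslate u (ztranslate v S) = ztranslate (u + v) S := by
  ext y
  simp only [ztranslate, image_image, mem_image]
  constructor
  · rintro ⟨x, hx, rfl⟩
    exact ⟨x, hx, by abel⟩
  · rintro ⟨x, hx, rfl⟩
    exact ⟨x, hx, by abel⟩

lemma zt_encard (u : Fin n → ℤ) (S : Set (Fin n → ℤ)) :
    (ztranslate u S).encard = S.encard :=
  (zt_inj u).encard_image S

lemma zt_inter (u : Fin n → ℤ) (S T : Set (Fin n → ℤ)) :
    ztranslate u (S ∩ T) = ztranslate u S ∩ ztranslate u T :=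
  image_inter (zt_inj u)

lemma zt_mono (u : Fin n → ℤ) {S T : Set (Fin n → ℤ)} (h : S ⊆ T) :
    ztranslate u S ⊆ ztranslate u T := image_mono h

/-- If `𝒜` is a collection of subsets of `ℤⁿ` (with `n ≥ 1`, `d ≥ 1`) such
that `ℤⁿ ∉ 𝒜`, every member of `𝒜` has at least `d` elements, and any two
translates of members of `𝒜` sharing at least `d` elements are equal, then the
collection of all translates of members of `𝒜`, together with all `d`-element
subsets of `ℤⁿ` contained in no such translate, is a `ℤⁿ`-invariant
`d`-partition of `ℤⁿ`. -/
theorem generated_dPartition (d : ℕ) (hd : 1 ≤ d) (hn : 1 ≤ n)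
    (𝒜 : Set (Set (Fin n → ℤ)))
    (hA1 : (univ : Set (Fin n → ℤ)) ∉ 𝒜)
    (hA2 : ∀ A ∈ 𝒜, (d : ℕ∞) ≤ A.encard)
    (hA3 : ∀ A₁ ∈ 𝒜, ∀ A₂ ∈ 𝒜, ∀ u : Fin n → ℤ,
      (d : ℕ∞) ≤ (A₁ ∩ ztranslate u A₂).encard → A₁ = ztranslate u A₂) :
    IsDPartition d
      ({T | ∃ u : Fin n → ℤ, ∃ A ∈ 𝒜, T = ztranslate u A} ∪
        {D | D.encard = d ∧ ∀ u : Fin n → ℤ, ∀ A ∈ 𝒜, ¬ D ⊆ ztranslate u A}) ∧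
    ZInvariant
      ({T | ∃ u : Fin n → ℤ, ∃ A ∈ 𝒜, T = ztranslate u A} ∪
        {D | D.encard = d ∧ ∀ u : Fin n → ℤ, ∀ A ∈ 𝒜, ¬ D ⊆ ztranslate u A}) := by
  haveI : Nonempty (Fin n) := ⟨⟨0, hn⟩⟩
  set P : Set (Set (Fin n → ℤ)) :=
    ({T | ∃ u : Fin n → ℤ, ∃ A ∈ 𝒜, T = ztranslate u A} ∪
      {D | D.encard = d ∧ ∀ u : Fin n → ℤ, ∀ A ∈ 𝒜, ¬ D ⊆ ztranslate u A}) with hP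
  -- closure under translation
  have hclosed : ∀ u : Fin n → ℤ, ∀ S ∈ P, ztranslate u S ∈ P := by
    intro u S hS
    rcases hS with ⟨v, A, hA, rfl⟩ | ⟨hcard, hbad⟩
    · exact Or.inl ⟨u + v, A, hA, zt_comp u v A⟩
    · refine Or.inr ⟨by rw [zt_encard]; exact hcard, ?_⟩
      intro v A hA hsub
      have : S ⊆ ztranslate (-u + v) A := by
        have := zt_mono (-u) hsub
        rwa [zt_comp, zt_comp, neg_add_cancel, zt_zero] at this
      exact hbad _ A hA this
  -- uniqueness helper
  have huniq : ∀ Y : Set (Fin n → ℤ), Y.encard = d →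
      ∀ S₁ ∈ P, ∀ S₂ ∈ P, Y ⊆ S₁ → Y ⊆ S₂ → S₁ = S₂ := by
    intro Y hY S₁ hS₁ S₂ hS₂ h1 h2
    have hDeq : ∀ D : Set (Fin n → ℤ), D.encard = d → Y ⊆ D → Y = D := by
      intro D hD hYD
      exact (finite_of_encard_eq_coe hD).eq_of_subset_of_encard_le' hYD (by rw [hY, hD])
    rcases hS₁ with ⟨u₁, A₁, hA₁, rfl⟩ | ⟨hc₁, hb₁⟩
    · rcases hS₂ with ⟨u₂, A₂, hA₂, rfl⟩ | ⟨hc₂, hb₂⟩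
      · have hsub : Y ⊆ ztranslate u₁ A₁ ∩ ztranslate u₂ A₂ := subset_inter h1 h2
        have hcd : (d : ℕ∞) ≤ (A₁ ∩ ztranslate (-u₁ + u₂) A₂).encard := by
          have he : ztranslate u₁ (A₁ ∩ ztranslate (-u₁ + u₂) A₂)
              = ztranslate u₁ A₁ ∩ ztranslate u₂ A₂ := by
            rw [zt_inter, zt_comp, add_neg_cancel_left]
          calc (d : ℕ∞) = Y.encard := hY.symm
            _ ≤ (ztranslate u₁ A₁ ∩ ztranslate u₂ A₂).encard := encard_le_encard hsub
            _ = (A₁ ∩ ztranslate (-u₁ + u₂) A₂).encard := by rw [← he, zt_encard]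
        have := hA3 A₁ hA₁ A₂ hA₂ _ hcd
        rw [this, zt_comp, add_neg_cancel_left]
      · exact absurd (hDeq S₂ hc₂ h2 ▸ h1) (hb₂ u₁ A₁ hA₁)
    · rcases hS₂ with ⟨u₂, A₂, hA₂, rfl⟩ | ⟨hc₂, hb₂⟩
      · exact absurd (hDeq S₁ hc₁ h1 ▸ h2) (hb₁ u₂ A₂ hA₂)
      · rw [← hDeq S₁ hc₁ h1, ← hDeq S₂ hc₂ h2]
  refine ⟨⟨?_, ?_, ?_⟩, ?_⟩
  -- 2 ≤ P.encard
  · rcases eq_empty_or_nonempty 𝒜 with h𝒜 | ⟨A, hA⟩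
    · -- 𝒜 empty: find two disjoint d-element sets
      have huinf : (univ : Set (Fin n → ℤ)).Infinite := infinite_univ
      obtain ⟨D₁, -, hD₁⟩ := exists_subset_encard_eq
        (le_of_le_of_eq le_top huinf.encard_eq.symm :
          (d : ℕ∞) ≤ (univ : Set (Fin n → ℤ)).encard)
      have hcinf : ((univ : Set (Fin n → ℤ)) \ D₁).Infinite :=
        huinf.diff (finite_of_encard_eq_coe hD₁)
      obtain ⟨D₂, hD₂s, hD₂⟩ := exists_subset_encard_eq
        (le_of_le_of_eq le_top hcinf.encard_eq.symm :
          (d : ℕ∞) ≤ ((univ : Set (Fin n → ℤ)) \ D₁).encard)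
      have h2ne : D₂.Nonempty := by
        rw [← encard_ne_zero, hD₂]
        simpa using Nat.one_le_iff_ne_zero.mp hd
      obtain ⟨x, hx⟩ := h2ne
      have hne : D₁ ≠ D₂ := fun h => (hD₂s hx).2 (h ▸ hx)
      have hbadv : ∀ D : Set (Fin n → ℤ),
          ∀ u : Fin n → ℤ, ∀ A ∈ 𝒜, ¬ D ⊆ ztranslate u A := by
        intro D u A hA
        rw [h𝒜] at hA
        exact absurd hA (notMem_empty A)
      have hsub : ({D₁, D₂} : Set (Set (Fin n → ℤ))) ⊆ P := by
        rintro S (rfl | rfl)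
        · exact Or.inr ⟨hD₁, hbadv _⟩
        · exact Or.inr ⟨hD₂, hbadv _⟩
      calc (2 : ℕ∞) = ({D₁, D₂} : Set (Set (Fin n → ℤ))).encard :=
            (encard_pair hne).symm
        _ ≤ P.encard := encard_le_encard hsub
    · -- 𝒜 nonempty: A and a nontrivial translate of A
      have hAne : A.Nonempty := by
        rw [← encard_ne_zero]
        intro h
        have := hA2 A hA
        rw [h] at this
        have hd0 : (d : ℕ∞) ≠ 0 := by simpa using Nat.one_le_iff_ne_zero.mp hd
        exact hd0 (le_antisymm this zero_le)
      obtain ⟨a, ha⟩ := hAne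
      obtain ⟨x, hx⟩ := (ne_univ_iff_exists_notMem A).mp (fun h => hA1 (h ▸ hA))
      have hxmem : x ∈ ztranslate (x - a) A := ⟨a, ha, sub_add_cancel x a⟩
      have hne : A ≠ ztranslate (x - a) A := fun h => hx (h ▸ hxmem)
      have hsub : ({A, ztranslate (x - a) A} : Set (Set (Fin n → ℤ))) ⊆ P := by
        intro S hS
        simp only [mem_insert_iff, mem_singleton_iff] at hS
        rcases hS with h | h
        · rw [h]; exact Or.inl ⟨0, A, hA, (zt_zero A).symm⟩
        · rw [h]; exact Or.inl ⟨x - a, A, hA, rfl⟩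
      calc (2 : ℕ∞) = ({A, ztranslate (x - a) A} : Set (Set (Fin n → ℤ))).encard :=
            (encard_pair hne).symm
        _ ≤ P.encard := encard_le_encard hsub
  -- every member has at least d elements
  · intro S hS
    rcases hS with ⟨u, A, hA, rfl⟩ | ⟨hcard, -⟩
    · rw [zt_encard]; exact hA2 A hA
    · exact le_of_eq hcard.symm
  -- unique containment
  · intro Y hY
    by_cases hex : ∃ u : Fin n → ℤ, ∃ A ∈ 𝒜, Y ⊆ ztranslate u A
    · obtain ⟨u, A, hA, hsub⟩ := hex
      have hmem : ztranslate u A ∈ P := Or.inl ⟨u, A, hA, rfl⟩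
      exact ⟨ztranslate u A, ⟨hmem, hsub⟩,
        fun S' hS' => huniq Y hY S' hS'.1 _ hmem hS'.2 hsub⟩
    · have hmem : Y ∈ P := Or.inr ⟨hY, fun u A hA hs => hex ⟨u, A, hA, hs⟩⟩
      exact ⟨Y, ⟨hmem, subset_rfl⟩,
        fun S' hS' => huniq Y hY S' hS'.1 Y hmem hS'.2 subset_rfl⟩
  -- ℤⁿ-invariance
  · intro u
    apply subset_antisymm
    · rintro _ ⟨S, hS, rfl⟩
      exact hclosed u S hS
    · intro S hS
      exact ⟨ztranslate (-u) S, hclosed (-u) S hS, by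
        rw [zt_comp, add_neg_cancel, zt_zero]⟩
end
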